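/- Riesz representation theorem: for every set A, the assignment 𝓘 ↦ (U ↦ 𝓘(𝟙_U)) is an order isomorphism from the partial order of lower integrals on A onto the partial order of valuations on A, restricting to an order isomorphism between sub-probability lower integrals and sub-probability valuations. Its inverse sends a valuation μ to the lower integral f ↦ ⋁_{m,n≥1} (1/m) ∑_{i=1}^{mn} μ([f > i/m]). -/

import Mathlib

/-- The initial σ-frame `𝕊`, as the least subset of the propositions `Ω = Prop`
containing `False` and `True` and closed under joins of increasing ω-chains
(equivalently, the image of the free ω-cpo completion of `𝔹 = {⊥ ≤ ⊤}` in `Ω`). -/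
inductive InS : Prop → Prop
  | bot : InS False
  | top : InS True
  | sup (c : ℕ → Prop) (mono : ∀ n, c n → c (n + 1)) (h : ∀ n, InS (c n)) :
      InS (∃ n, c n)

theorem InS.of_decidable (p : Prop) [Decidable p] : InS p := by
  by_cases h : p
  · rw [eq_true h]; exact InS.top
  · rw [eq_false h]; exact InS.bot

/-- A map between preorders is ω-(Scott-)continuous if it is monotone and preserves
least upper bounds of enumerable directed subsets. -/
def OmegaContinuous {C D : Type} [Preorder C] [Preorder D] (f : C → D) : Prop :=
  Monotone f ∧
    ∀ (U : Set C) (x : C), U.Countable → U.Nonempty → DirectedOn (· ≤ ·) U →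
      IsLUB U x → IsLUB (f '' U) (f x)

/-- A preorder is an ω-cpo if every enumerable directed subset has a least upper bound. -/
def IsOmegaCPO (C : Type) [Preorder C] : Prop :=
  ∀ U : Set C, U.Countable → U.Nonempty → DirectedOn (· ≤ ·) U → ∃ x, IsLUB U x

/-- A cover-preserving monotone map from an ω-cpo presentation `(P, Cov)` into an
ordered set: the image of each cover has a least upper bound above the image of the
covered element. -/
def CovMorphism {P C : Type} [Preorder P] [Preorder C]
    (Cov : P → Set P → Prop) (f : P → C) : Prop :=
  Monotone f ∧ ∀ p U, Cov p U → ∃ s, IsLUB (f '' U) s ∧ f p ≤ s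

/-- `(Pω, η)` is the free ω-cpo completion of the ω-cpo presentation `(P, Cov)`:
`Pω` is an ω-cpo, `η` is a cover-preserving monotone map, and every cover-preserving
monotone map from `P` into an ω-cpo extends uniquely to an ω-continuous map on `Pω`. -/
structure IsFreeOmegaCompletion {P : Type} [Preorder P] (Cov : P → Set P → Prop)
    (Pω : Type) [PartialOrder Pω] (η : P → Pω) : Prop where
  cpo : IsOmegaCPO Pω
  eta_morph : CovMorphism Cov η
  extend_unique : ∀ (C : Type) [PartialOrder C], IsOmegaCPO C →
    ∀ f : P → C, CovMorphism Cov f →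
      ∃! g : Pω → C, OmegaContinuous g ∧ ∀ p, g (η p) = f p

/-- The Sierpinski space as a subtype of the propositions, ordered by implication. -/
abbrev Sierp := {p : Prop // InS p}

theorem InS.or {p q : Prop} (hp : InS p) (hq : InS q) : InS (p ∨ q) := by
  induction hp with
  | bot => simp only [false_or]; exact hq
  | top => simp only [true_or]; exact InS.top
  | sup c mono h ih =>
      have e : ((∃ n, c n) ∨ q) = (∃ n, c n ∨ q) := propext <| by
        constructor
        · rintro (⟨n, hn⟩ | hq')
          · exact ⟨n, Or.inl hn⟩
          · exact ⟨0, Or.inr hq'⟩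
        · rintro ⟨n, hn | hq'⟩
          · exact Or.inl ⟨n, hn⟩
          · exact Or.inr hq'
      rw [e]
      exact InS.sup _ (fun n => Or.imp_left (mono n)) ih

theorem InS.and {p q : Prop} (hp : InS p) (hq : InS q) : InS (p ∧ q) := by
  induction hp with
  | bot => simp only [false_and]; exact InS.bot
  | top => simp only [true_and]; exact hq
  | sup c mono h ih =>
      have e : ((∃ n, c n) ∧ q) = (∃ n, c n ∧ q) := propext <| by
        constructor
        · rintro ⟨⟨n, hn⟩, hq'⟩
          exact ⟨n, hn, hq'⟩
        · rintro ⟨n, hn, hq'⟩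
          exact ⟨⟨n, hn⟩, hq'⟩
      rw [e]
      exact InS.sup _ (fun n => And.imp_left (mono n)) ih

theorem InS.exists_nat (p : ℕ → Prop) (h : ∀ n, InS (p n)) : InS (∃ n, p n) := by
  have key : ∀ m, InS (∃ k, k ≤ m ∧ p k) := by
    intro m
    induction m with
    | zero =>
        have e : (∃ k, k ≤ 0 ∧ p k) = p 0 := propext <| by
          constructor
          · rintro ⟨k, hk, hp⟩
            rwa [Nat.le_zero.mp hk] at hp
          · exact fun hp => ⟨0, le_refl _, hp⟩
        rw [e]; exact h 0
    | succ m ih =>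
        have e : (∃ k, k ≤ m + 1 ∧ p k) = ((∃ k, k ≤ m ∧ p k) ∨ p (m + 1)) :=
          propext <| by
            constructor
            · rintro ⟨k, hk, hp⟩
              rcases Nat.eq_or_lt_of_le hk with rfl | hk'
              · exact Or.inr hp
              · exact Or.inl ⟨k, Nat.lt_succ_iff.mp hk', hp⟩
            · rintro (⟨k, hk, hp⟩ | hp)
              · exact ⟨k, hk.trans (Nat.le_succ m), hp⟩
              · exact ⟨m + 1, le_refl _, hp⟩
        rw [e]; exact ih.or (h (m + 1))
  have e : (∃ n, p n) = (∃ m, ∃ k, k ≤ m ∧ p k) := propext <| by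
    constructor
    · rintro ⟨n, hn⟩
      exact ⟨n, n, le_refl _, hn⟩
    · rintro ⟨m, k, _, hk⟩
      exact ⟨k, hk⟩
  rw [e]
  exact InS.sup _ (fun m ⟨k, hk, hp⟩ => ⟨k, hk.trans (Nat.le_succ m), hp⟩) key

def Sierp.botS : Sierp := ⟨False, InS.bot⟩
def Sierp.topS : Sierp := ⟨True, InS.top⟩
def Sierp.or (s t : Sierp) : Sierp := ⟨s.1 ∨ t.1, s.2.or t.2⟩
def Sierp.and (s t : Sierp) : Sierp := ⟨s.1 ∧ t.1, s.2.and t.2⟩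

/-- Enumerable joins in the Sierpinski space. -/
def Sierp.joinSeq (s : ℕ → Sierp) : Sierp :=
  ⟨∃ n, (s n).1, InS.exists_nat _ (fun n => (s n).2)⟩

/-- A lower real: an `𝕊`-valued, inhabited, rounded, downward-closed cut of rationals. -/
structure LowerReal where
  cut : ℚ → Prop
  inS : ∀ q, InS (cut q)
  inhab : ∃ q, cut q
  rounded : ∀ q, cut q → ∃ q', q < q' ∧ cut q'
  lower : ∀ q q', q < q' → cut q' → cut q

instance : Preorder LowerReal where
  le L₁ L₂ := ∀ q, L₁.cut q → L₂.cut q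
  le_refl _ _ h := h
  le_trans _ _ _ h₁ h₂ q hq := h₂ q (h₁ q hq)

/-- The lower real associated to a rational number. -/
def ratLR (q : ℚ) : LowerReal where
  cut p := p < q
  inS _ := InS.of_decidable _
  inhab := ⟨q - 1, by linarith⟩
  rounded p hp := ⟨(p + q) / 2, by constructor <;> linarith⟩
  lower _ _ h h' := lt_trans h h'

/-- The non-negative rationals. -/
abbrev QPlus := {q : ℚ // 0 ≤ q}

/-- The non-negative lower reals `ℝ_l⁺`. -/
abbrev NNLowerReal := {L : LowerReal // ∀ q : ℚ, q < 0 → L.cut q}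

/-- The non-negative lower real associated to a non-negative rational. -/
def ratNN (q : QPlus) : NNLowerReal :=
  ⟨ratLR q.1, fun _ hp => lt_of_lt_of_le hp q.2⟩

def zeroNN : NNLowerReal := ratNN ⟨0, le_refl 0⟩
def oneNN : NNLowerReal := ratNN ⟨1, by norm_num⟩

/-- `r : 𝕊 → ℝ_l⁺`, the unique ω-continuous map with `r ⊥ = 0` and `r ⊤ = 1`;
`indicatorLR (U a)` is the real indicator function `𝟙_U` of an open `U`. -/
def indicatorLR (s : Sierp) : NNLowerReal :=
  ⟨{ cut := fun q => q < 0 ∨ (s.1 ∧ q < 1)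
     inS := fun q => by
       show InS (q < 0 ∨ (s.1 ∧ q < 1))
       by_cases h0 : q < 0
       · rw [eq_true (Or.inl h0 : q < 0 ∨ (s.1 ∧ q < 1))]; exact InS.top
       · rw [eq_false h0, false_or]
         by_cases h1 : q < 1
         · rw [eq_true h1, and_true]; exact s.2
         · rw [eq_false h1, and_false]; exact InS.bot
     inhab := ⟨-1, Or.inl (by norm_num)⟩
     rounded := fun q hq => by
       rcases hq with h | ⟨hs, h1⟩
       · exact ⟨q / 2, by linarith, Or.inl (by linarith)⟩
       · exact ⟨(q + 1) / 2, by
           constructor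
           · linarith
           · exact Or.inr ⟨hs, by linarith⟩⟩
     lower := fun q q' h hq' => by
       rcases hq' with h' | ⟨hs, h1⟩
       · exact Or.inl (lt_trans h h')
       · by_cases h0 : q < 0
         · exact Or.inl h0
         · exact Or.inr ⟨hs, lt_trans h h1⟩ },
   fun q hq => Or.inl hq⟩

/-- Specification of the addition on the non-negative lower reals: ω-continuous in
each argument and extending addition of non-negative rationals. -/
def AddSpecNN (add : NNLowerReal → NNLowerReal → NNLowerReal) : Prop :=
  (∀ L, OmegaContinuous (add L)) ∧ (∀ L, OmegaContinuous (fun x => add x L)) ∧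
    ∀ q q' : QPlus, add (ratNN q) (ratNN q') = ratNN ⟨q.1 + q'.1, add_nonneg q.2 q'.2⟩

/-- Specification of the multiplication on the non-negative lower reals: ω-continuous
in each argument and extending multiplication of non-negative rationals. -/
def MulSpecNN (mul : NNLowerReal → NNLowerReal → NNLowerReal) : Prop :=
  (∀ L, OmegaContinuous (mul L)) ∧ (∀ L, OmegaContinuous (fun x => mul x L)) ∧
    ∀ q q' : QPlus, mul (ratNN q) (ratNN q') = ratNN ⟨q.1 * q'.1, mul_nonneg q.2 q'.2⟩

/-- A lower integral on `A`: an ω-continuous, bottom-preserving, additive map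
`(A → ℝ_l⁺) → ℝ_l⁺`. -/
def IsLowerIntegral {A : Type} (add : NNLowerReal → NNLowerReal → NNLowerReal)
    (I : (A → NNLowerReal) → NNLowerReal) : Prop :=
  OmegaContinuous I ∧ I (fun _ => zeroNN) = zeroNN ∧
    ∀ f g : A → NNLowerReal, I (fun a => add (f a) (g a)) = add (I f) (I g)

/-- A valuation on `A`: an ω-continuous, bottom-preserving, modular map
`𝒪(A) = (A → 𝕊) → ℝ_l⁺`. -/
def IsValuation {A : Type} (add : NNLowerReal → NNLowerReal → NNLowerReal)
    (μ : (A → Sierp) → NNLowerReal) : Prop :=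
  OmegaContinuous μ ∧ μ (fun _ => Sierp.botS) = zeroNN ∧
    ∀ U V : A → Sierp,
      add (μ U) (μ V) =
        add (μ (fun a => (U a).or (V a))) (μ (fun a => (U a).and (V a)))

/-- The open subset `[f > q] = {x ∈ A | q < f x}` of `A`. -/
def openGT {A : Type} (f : A → NNLowerReal) (q : ℚ) : A → Sierp :=
  fun a => ⟨(f a).1.cut q, (f a).1.inS q⟩

/-- The approximating simple sum `s_{f,m,n} = (1/m) ∑_{i=1}^{mn} μ([f > i/m])`. -/
def sFMN {A : Type} (add mul : NNLowerReal → NNLowerReal → NNLowerReal)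
    (μ : (A → Sierp) → NNLowerReal) (f : A → NNLowerReal) (m n : ℕ) : NNLowerReal :=
  mul (ratNN ⟨1 / (m : ℚ), by positivity⟩)
    ((List.range (m * n)).foldr
      (fun i acc => add (μ (openGT f (((i : ℚ) + 1) / (m : ℚ)))) acc) zeroNN)

open scoped ENNReal
open MeasureTheory

noncomputable section

theorem InS_all (p : Prop) : InS p := by
  classical exact InS.of_decidable p

theorem NN.ext {L M : NNLowerReal} (h : ∀ q, L.1.cut q ↔ M.1.cut q) : L = M := by
  rcases L with ⟨⟨c1, _, _, _, _⟩, _⟩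
  rcases M with ⟨⟨c2, _, _, _, _⟩, _⟩
  have : c1 = c2 := funext fun q => propext (h q)
  subst this
  rfl

/-- `toE` : NNLowerReal → ℝ≥0∞. -/
def toE (L : NNLowerReal) : ℝ≥0∞ :=
  ⨆ q : {q : ℚ // 0 ≤ q ∧ L.1.cut q}, ENNReal.ofReal (q.1 : ℝ)

theorem cut_iff_lt_toE (L : NNLowerReal) {q : ℚ} (hq : 0 ≤ q) :
    L.1.cut q ↔ ENNReal.ofReal (q : ℝ) < toE L := by
  constructor
  · intro h
    obtain ⟨q', hqq', hq'⟩ := L.1.rounded q h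
    calc ENNReal.ofReal (q : ℝ) < ENNReal.ofReal (q' : ℝ) := by
          rw [ENNReal.ofReal_lt_ofReal_iff_of_nonneg (by exact_mod_cast hq : (0:ℝ) ≤ (q:ℝ))]
          exact_mod_cast hqq'
      _ ≤ toE L := le_iSup (fun p : {q : ℚ // 0 ≤ q ∧ L.1.cut q} =>
          ENNReal.ofReal (p.1 : ℝ)) ⟨q', le_trans hq hqq'.le, hq'⟩
  · intro h
    obtain ⟨⟨q', _, hc⟩, hlt⟩ := lt_iSup_iff.mp h
    have : (q : ℝ) < q' := by
      by_contra hh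
      exact absurd (ENNReal.ofReal_le_ofReal (not_lt.mp hh)) (not_le.mpr hlt)
    exact L.1.lower q q' (by exact_mod_cast this) hc

theorem cut_of_neg (L : NNLowerReal) {q : ℚ} (hq : q < 0) : L.1.cut q := L.2 q hq

theorem toE_le_iff {L M : NNLowerReal} : toE L ≤ toE M ↔ L ≤ M := by
  constructor
  · intro h q hq
    rcases lt_or_ge q 0 with h0 | h0
    · exact cut_of_neg M h0
    · exact (cut_iff_lt_toE M h0).2 (lt_of_lt_of_le ((cut_iff_lt_toE L h0).1 hq) h)
  · intro h
    apply iSup_le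
    rintro ⟨q, hq0, hc⟩
    exact le_of_lt ((cut_iff_lt_toE M hq0).1 (h q hc))

theorem toE_lt_ofReal {L : NNLowerReal} {q : ℚ} (hq0 : 0 ≤ q) (h : ¬ L.1.cut q) :
    toE L ≤ ENNReal.ofReal (q : ℝ) := by
  apply iSup_le
  rintro ⟨p, hp0, hc⟩
  apply ENNReal.ofReal_le_ofReal
  have : p ≤ q := by
    by_contra hh
    exact h (L.1.lower q p (not_le.mp hh) hc)
  exact_mod_cast this

theorem toE_inj {L M : NNLowerReal} (h : toE L = toE M) : L = M :=
  NN.ext fun q => by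
    rcases lt_or_ge q 0 with h0 | h0
    · exact iff_of_true (cut_of_neg L h0) (cut_of_neg M h0)
    · rw [cut_iff_lt_toE L h0, cut_iff_lt_toE M h0, h]

theorem toE_mono : Monotone toE := fun _ _ h => toE_le_iff.2 h

/-- `ofE` : ℝ≥0∞ → NNLowerReal. -/
def ofE (x : ℝ≥0∞) : NNLowerReal :=
  ⟨{ cut := fun q => q < 0 ∨ (0 ≤ q ∧ ENNReal.ofReal (q : ℝ) < x)
     inS := fun q => InS_all _
     inhab := ⟨-1, Or.inl (by norm_num)⟩
     rounded := by
       rintro q (h | ⟨h0, h1⟩)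
       · exact ⟨q / 2, by linarith, Or.inl (by linarith)⟩
       · obtain ⟨r, hr0, hr1, hr2⟩ := ENNReal.lt_iff_exists_rat_btwn.1 h1
         refine ⟨r, ?_, Or.inr ⟨hr0, ?_⟩⟩
         · have := (ENNReal.ofReal_lt_ofReal_iff_of_nonneg
             (by exact_mod_cast h0 : (0:ℝ) ≤ (q:ℝ))).1 hr1
           exact_mod_cast this
         · exact hr2
     lower := by
       rintro q q' hlt (h | ⟨h0, h1⟩)
       · exact Or.inl (lt_trans hlt h)
       · rcases lt_or_ge q 0 with hq | hq
         · exact Or.inl hq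
         · refine Or.inr ⟨hq, lt_of_le_of_lt ?_ h1⟩
           exact ENNReal.ofReal_le_ofReal (by exact_mod_cast hlt.le) },
   fun q hq => Or.inl hq⟩

theorem ofE_toE (L : NNLowerReal) : ofE (toE L) = L := by
  apply NN.ext
  intro q
  show (q < 0 ∨ (0 ≤ q ∧ ENNReal.ofReal (q : ℝ) < toE L)) ↔ L.1.cut q
  rcases lt_or_ge q 0 with h0 | h0
  · exact iff_of_true (Or.inl h0) (cut_of_neg L h0)
  · constructor
    · rintro (h | ⟨_, h⟩)
      · exact absurd h0 (not_le.2 h)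
      · exact (cut_iff_lt_toE L h0).2 h
    · intro h; exact Or.inr ⟨h0, (cut_iff_lt_toE L h0).1 h⟩

theorem toE_ofE (x : ℝ≥0∞) : toE (ofE x) = x := by
  apply le_antisymm
  · apply iSup_le
    rintro ⟨q, hq0, (h | ⟨_, h⟩)⟩
    · exact absurd hq0 (not_le.2 h)
    · exact h.le
  · refine le_of_forall_lt ?_
    intro c hc
    obtain ⟨r, hr0, hr1, hr2⟩ := ENNReal.lt_iff_exists_rat_btwn.1 hc
    calc c < ENNReal.ofReal (r : ℝ) := hr1
      _ ≤ toE (ofE x) := le_iSup (fun p : {q : ℚ // 0 ≤ q ∧ (ofE x).1.cut q} =>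
          ENNReal.ofReal (p.1 : ℝ)) ⟨r, hr0, Or.inr ⟨hr0, hr2⟩⟩

theorem ofE_inj {x y : ℝ≥0∞} (h : ofE x = ofE y) : x = y := by
  rw [← toE_ofE x, ← toE_ofE y, h]

theorem ofE_le_iff {x y : ℝ≥0∞} : ofE x ≤ ofE y ↔ x ≤ y := by
  rw [← toE_le_iff, toE_ofE, toE_ofE]

theorem toE_ratNN (q : QPlus) : toE (ratNN q) = ENNReal.ofReal (q.1 : ℝ) := by
  have : ratNN q = ofE (ENNReal.ofReal (q.1 : ℝ)) := by
    apply NN.ext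
    intro p
    show p < q.1 ↔ (p < 0 ∨ (0 ≤ p ∧ ENNReal.ofReal (p : ℝ) < ENNReal.ofReal (q.1 : ℝ)))
    constructor
    · intro h
      rcases lt_or_ge p 0 with h0 | h0
      · exact Or.inl h0
      · refine Or.inr ⟨h0, (ENNReal.ofReal_lt_ofReal_iff_of_nonneg
          (by exact_mod_cast h0 : (0:ℝ) ≤ (p:ℝ))).2 ?_⟩
        exact_mod_cast h
    · rintro (h | ⟨h0, h1⟩)
      · exact lt_of_lt_of_le h q.2
      · have := (ENNReal.ofReal_lt_ofReal_iff_of_nonneg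
          (by exact_mod_cast h0 : (0:ℝ) ≤ (p:ℝ))).1 h1
        exact_mod_cast this
  rw [this, toE_ofE]

theorem toE_zeroNN : toE zeroNN = 0 := by
  rw [show zeroNN = ratNN ⟨0, le_refl 0⟩ from rfl, toE_ratNN]; simp

theorem toE_oneNN : toE oneNN = 1 := by
  rw [show oneNN = ratNN ⟨1, by norm_num⟩ from rfl, toE_ratNN]; simp

open Classical in
theorem toE_indicatorLR (s : Sierp) : toE (indicatorLR s) = if s.1 then 1 else 0 := by
  have : indicatorLR s = ofE (if s.1 then 1 else 0) := by
    apply NN.ext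
    intro q
    show (q < 0 ∨ (s.1 ∧ q < 1)) ↔ (q < 0 ∨ (0 ≤ q ∧ ENNReal.ofReal (q:ℝ) < if s.1 then 1 else 0))
    rcases lt_or_ge q 0 with h0 | h0
    · exact iff_of_true (Or.inl h0) (Or.inl h0)
    · by_cases hs : s.1
      · rw [if_pos hs]
        constructor
        · rintro (h | ⟨_, h⟩)
          · exact Or.inl h
          · exact Or.inr ⟨h0, ENNReal.ofReal_lt_one.2 (by exact_mod_cast h)⟩
        · rintro (h | ⟨_, h⟩)
          · exact Or.inl h
          · exact Or.inr ⟨hs, by exact_mod_cast ENNReal.ofReal_lt_one.1 h⟩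
      · rw [if_neg hs]
        constructor
        · rintro (h | ⟨h', _⟩)
          · exact Or.inl h
          · exact absurd h' hs
        · rintro (h | ⟨_, h⟩)
          · exact Or.inl h
          · exact absurd h (ENNReal.not_lt_zero)
  rw [this, toE_ofE]

end
noncomputable section

theorem isLUB_eval {A : Type} {C : Type*} [Preorder C] {S : Set (A → C)} {x : A → C}
    (h : IsLUB S x) (a : A) : IsLUB ((fun f => f a) '' S) (x a) := by
  classical
  constructor
  · rintro y ⟨f, hf, rfl⟩
    exact h.1 hf a
  · intro y hy
    have hub : x ≤ Function.update x a y := by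
      apply h.2
      intro f hf b
      by_cases hb : b = a
      · subst hb; rw [Function.update_self]; exact hy ⟨f, hf, rfl⟩
      · rw [Function.update_of_ne hb]; exact h.1 hf b
    have := hub a
    rwa [Function.update_self] at this

theorem isLUB_toE {S : Set NNLowerReal} {x : NNLowerReal} (h : IsLUB S x) :
    IsLUB (toE '' S) (toE x) := by
  constructor
  · rintro y ⟨s, hs, rfl⟩
    exact toE_le_iff.2 (h.1 hs)
  · intro y hy
    have hub : ∀ s ∈ S, s ≤ ofE y := by
      intro s hs
      rw [← ofE_toE s, ofE_le_iff]
      exact hy ⟨s, hs, rfl⟩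
    have := h.2 hub
    calc toE x ≤ toE (ofE y) := toE_le_iff.2 this
      _ = y := toE_ofE y

theorem isLUB_of_toE {S : Set NNLowerReal} {x : NNLowerReal}
    (h : IsLUB (toE '' S) (toE x)) : IsLUB S x := by
  constructor
  · intro s hs
    exact toE_le_iff.1 (h.1 ⟨s, hs, rfl⟩)
  · intro y hy
    apply toE_le_iff.1
    apply h.2
    rintro z ⟨s, hs, rfl⟩
    exact toE_le_iff.2 (hy hs)

theorem sSup_toE {S : Set NNLowerReal} {x : NNLowerReal} (h : IsLUB S x) :
    toE x = sSup (toE '' S) := ((isLUB_toE h).unique (isLUB_sSup _))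

theorem exists_monotone_cofinal {C : Type*} [Preorder C] {U : Set C}
    (hc : U.Countable) (hne : U.Nonempty) (hd : DirectedOn (· ≤ ·) U) :
    ∃ g : ℕ → C, (∀ n, g n ∈ U) ∧ Monotone g ∧ ∀ u ∈ U, ∃ n, u ≤ g n := by
  obtain ⟨e, he⟩ := Set.Countable.exists_eq_range hc hne
  have hmem : ∀ n, e n ∈ U := fun n => he ▸ ⟨n, rfl⟩
  have key : ∀ (x : C), x ∈ U → ∀ (y : C), y ∈ U → ∃ z, z ∈ U ∧ x ≤ z ∧ y ≤ z :=
    fun x hx y hy => hd x hx y hy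
  let g : ℕ → {x // x ∈ U} := fun n =>
    Nat.rec ⟨e 0, hmem 0⟩
      (fun n gn => ⟨Classical.choose (key gn.1 gn.2 (e (n+1)) (hmem (n+1))),
        (Classical.choose_spec (key gn.1 gn.2 (e (n+1)) (hmem (n+1)))).1⟩) n
  have hstep : ∀ n, (g n).1 ≤ (g (n+1)).1 ∧ e (n+1) ≤ (g (n+1)).1 := by
    intro n
    have := Classical.choose_spec (key (g n).1 (g n).2 (e (n+1)) (hmem (n+1)))
    exact ⟨this.2.1, this.2.2⟩
  refine ⟨fun n => (g n).1, fun n => (g n).2,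
    monotone_nat_of_le_succ (fun n => (hstep n).1), ?_⟩
  intro u hu
  rw [he] at hu
  obtain ⟨n, rfl⟩ := hu
  cases n with
  | zero => exact ⟨0, le_refl _⟩
  | succ n => exact ⟨n + 1, (hstep n).2⟩

/-- Rationals below a lower real. -/
def Qbelow (x : NNLowerReal) : Type := {q : QPlus // ENNReal.ofReal (q.1 : ℝ) ≤ toE x}

instance (x : NNLowerReal) : Countable (Qbelow x) := by
  unfold Qbelow; infer_instance

instance (x : NNLowerReal) : Nonempty (Qbelow x) :=
  ⟨⟨⟨0, le_refl 0⟩, by simp⟩⟩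

theorem iSup_Qbelow (x : NNLowerReal) :
    ⨆ q : Qbelow x, ENNReal.ofReal (q.1.1 : ℝ) = toE x := by
  apply le_antisymm
  · exact iSup_le fun q => q.2
  · refine le_of_forall_lt ?_
    intro c hc
    obtain ⟨r, hr0, hr1, hr2⟩ := ENNReal.lt_iff_exists_rat_btwn.1 hc
    calc c < ENNReal.ofReal (r : ℝ) := hr1
      _ ≤ _ := le_iSup (fun q : Qbelow x => ENNReal.ofReal (q.1.1 : ℝ))
          ⟨⟨r, hr0⟩, hr2.le⟩

def ratSet (x : NNLowerReal) : Set NNLowerReal :=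
  Set.range (fun q : Qbelow x => ratNN q.1)

theorem ratSet_countable (x : NNLowerReal) : (ratSet x).Countable :=
  Set.countable_range _

theorem ratSet_nonempty (x : NNLowerReal) : (ratSet x).Nonempty :=
  Set.range_nonempty _

theorem ratNN_le_iff {q : QPlus} {x : NNLowerReal} :
    ratNN q ≤ x ↔ ENNReal.ofReal (q.1 : ℝ) ≤ toE x := by
  rw [← toE_le_iff, toE_ratNN]

theorem ratSet_directed (x : NNLowerReal) : DirectedOn (· ≤ ·) (ratSet x) := by
  rintro _ ⟨q, rfl⟩ _ ⟨q', rfl⟩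
  rcases le_total q.1.1 q'.1.1 with h | h
  · exact ⟨ratNN q'.1, ⟨q', rfl⟩, fun p hp => lt_of_lt_of_le hp h, le_refl _⟩
  · exact ⟨ratNN q.1, ⟨q, rfl⟩, le_refl _, fun p hp => lt_of_lt_of_le hp h⟩

theorem ratSet_isLUB (x : NNLowerReal) : IsLUB (ratSet x) x := by
  constructor
  · rintro _ ⟨q, rfl⟩
    exact ratNN_le_iff.2 q.2
  · intro y hy
    rw [← toE_le_iff, ← iSup_Qbelow x]
    apply iSup_le
    intro q
    calc ENNReal.ofReal (q.1.1 : ℝ) = toE (ratNN q.1) := (toE_ratNN q.1).symm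
      _ ≤ toE y := toE_le_iff.2 (hy ⟨q, rfl⟩)

theorem lub_image_range {f : NNLowerReal → NNLowerReal} {x : NNLowerReal} {y : NNLowerReal}
    (h : IsLUB (f '' ratSet y) x) :
    toE x = ⨆ q : Qbelow y, toE (f (ratNN q.1)) := by
  have := sSup_toE h
  rw [this, ratSet, ← Set.range_comp, ← Set.range_comp, sSup_range]
  rfl

theorem toE_add {add : NNLowerReal → NNLowerReal → NNLowerReal} (hadd : AddSpecNN add)
    (x y : NNLowerReal) : toE (add x y) = toE x + toE y := by
  have inner : ∀ q' : QPlus, toE (add x (ratNN q')) = toE x + ENNReal.ofReal (q'.1 : ℝ) := by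
    intro q'
    have hcont := (hadd.2.1 (ratNN q')).2 (ratSet x) x (ratSet_countable x)
      (ratSet_nonempty x) (ratSet_directed x) (ratSet_isLUB x)
    have := lub_image_range hcont
    rw [this]
    have : ∀ q : Qbelow x, toE (add (ratNN q.1) (ratNN q')) =
        ENNReal.ofReal (q.1.1 : ℝ) + ENNReal.ofReal (q'.1 : ℝ) := by
      intro q
      rw [hadd.2.2 q.1 q', toE_ratNN]
      push_cast
      rw [ENNReal.ofReal_add (by exact_mod_cast q.1.2) (by exact_mod_cast q'.2)]
    simp_rw [this]
    calc ⨆ q : Qbelow x, (ENNReal.ofReal (q.1.1:ℝ) + ENNReal.ofReal (q'.1:ℝ))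
        = (⨆ q : Qbelow x, ENNReal.ofReal (q.1.1:ℝ)) + ENNReal.ofReal (q'.1:ℝ) :=
          (ENNReal.iSup_add _).symm
      _ = toE x + ENNReal.ofReal (q'.1:ℝ) := by rw [iSup_Qbelow]
  have hcont := (hadd.1 x).2 (ratSet y) y (ratSet_countable y)
    (ratSet_nonempty y) (ratSet_directed y) (ratSet_isLUB y)
  have := lub_image_range hcont
  rw [this]
  simp_rw [inner]
  calc ⨆ q : Qbelow y, (toE x + ENNReal.ofReal (q.1.1:ℝ))
      = toE x + (⨆ q : Qbelow y, ENNReal.ofReal (q.1.1:ℝ)) := (ENNReal.add_iSup _).symm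
    _ = toE x + toE y := by rw [iSup_Qbelow]

theorem toE_mul {mul : NNLowerReal → NNLowerReal → NNLowerReal} (hmul : MulSpecNN mul)
    (x y : NNLowerReal) : toE (mul x y) = toE x * toE y := by
  have inner : ∀ q' : QPlus, toE (mul x (ratNN q')) = toE x * ENNReal.ofReal (q'.1 : ℝ) := by
    intro q'
    have hcont := (hmul.2.1 (ratNN q')).2 (ratSet x) x (ratSet_countable x)
      (ratSet_nonempty x) (ratSet_directed x) (ratSet_isLUB x)
    have := lub_image_range hcont
    rw [this]
    have : ∀ q : Qbelow x, toE (mul (ratNN q.1) (ratNN q')) =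
        ENNReal.ofReal (q.1.1 : ℝ) * ENNReal.ofReal (q'.1 : ℝ) := by
      intro q
      rw [hmul.2.2 q.1 q', toE_ratNN]
      push_cast
      rw [ENNReal.ofReal_mul (by exact_mod_cast q.1.2)]
    simp_rw [this]
    calc ⨆ q : Qbelow x, (ENNReal.ofReal (q.1.1:ℝ) * ENNReal.ofReal (q'.1:ℝ))
        = (⨆ q : Qbelow x, ENNReal.ofReal (q.1.1:ℝ)) * ENNReal.ofReal (q'.1:ℝ) :=
          (ENNReal.iSup_mul _ _).symm
      _ = toE x * ENNReal.ofReal (q'.1:ℝ) := by rw [iSup_Qbelow]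
  have hcont := (hmul.1 x).2 (ratSet y) y (ratSet_countable y)
    (ratSet_nonempty y) (ratSet_directed y) (ratSet_isLUB y)
  have := lub_image_range hcont
  rw [this]
  simp_rw [inner]
  calc ⨆ q : Qbelow y, (toE x * ENNReal.ofReal (q.1.1:ℝ))
      = toE x * (⨆ q : Qbelow y, ENNReal.ofReal (q.1.1:ℝ)) := (ENNReal.mul_iSup _ _).symm
    _ = toE x * toE y := by rw [iSup_Qbelow]

theorem add_ofE {add : NNLowerReal → NNLowerReal → NNLowerReal} (hadd : AddSpecNN add)
    (a b : ℝ≥0∞) : add (ofE a) (ofE b) = ofE (a + b) := by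
  apply toE_inj
  rw [toE_add hadd, toE_ofE, toE_ofE, toE_ofE]

end
noncomputable section

open MeasureTheory

theorem Sierp.le_def {s t : Sierp} : s ≤ t ↔ (s.1 → t.1) := Iff.rfl

def toS {A : Type} (U : Set A) : A → Sierp := fun a => ⟨a ∈ U, InS_all _⟩

def toSet {A : Type} (U : A → Sierp) : Set A := {a | (U a).1}

theorem toS_toSet {A : Type} (U : A → Sierp) : toS (toSet U) = U :=
  funext fun _ => Subtype.ext rfl

theorem toS_mono {A : Type} {U V : Set A} (h : U ⊆ V) : toS U ≤ toS V :=
  fun a => Sierp.le_def.2 (fun ha => h ha)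

section Valuation

variable {A : Type} {add : NNLowerReal → NNLowerReal → NNLowerReal}
  {μ : (A → Sierp) → NNLowerReal}

/-- The set function induced by a valuation. -/
def vSet (μ : (A → Sierp) → NNLowerReal) (U : Set A) : ℝ≥0∞ := toE (μ (toS U))

theorem toS_empty : toS (∅ : Set A) = (fun _ => Sierp.botS) :=
  funext fun a => Subtype.ext (propext (iff_of_false (fun h => h) (fun h => h)))

theorem vSet_empty (hμ : IsValuation add μ) : vSet μ ∅ = 0 := by
  rw [vSet, toS_empty, hμ.2.1, toE_zeroNN]

theorem vSet_mono (hμ : IsValuation add μ) {U V : Set A} (h : U ⊆ V) :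
    vSet μ U ≤ vSet μ V :=
  toE_le_iff.2 (hμ.1.1 (toS_mono h))

theorem vSet_union_disjoint (hadd : AddSpecNN add) (hμ : IsValuation add μ)
    {U V : Set A} (h : Disjoint U V) : vSet μ (U ∪ V) = vSet μ U + vSet μ V := by
  have hmod := hμ.2.2 (toS U) (toS V)
  have hor : (fun a => ((toS U) a).or ((toS V) a)) = toS (U ∪ V) :=
    funext fun a => Subtype.ext rfl
  have hand : (fun a => ((toS U) a).and ((toS V) a)) = toS (U ∩ V) :=
    funext fun a => Subtype.ext rfl
  rw [hor, hand, Set.disjoint_iff_inter_eq_empty.1 h, toS_empty, hμ.2.1] at hmod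
  have := congrArg toE hmod
  rw [toE_add hadd, toE_add hadd, toE_zeroNN, add_zero] at this
  rw [vSet, vSet, vSet, ← this]

theorem vSet_iUnion_monotone (hμ : IsValuation add μ) (B : ℕ → Set A) (hB : Monotone B) :
    vSet μ (⋃ n, B n) = ⨆ n, vSet μ (B n) := by
  have hlub : IsLUB (Set.range (fun n => toS (B n))) (toS (⋃ n, B n)) := by
    constructor
    · rintro _ ⟨n, rfl⟩
      exact toS_mono (Set.subset_iUnion B n)
    · intro h hh a
      rw [Sierp.le_def]
      rintro ⟨s, ⟨n, rfl⟩, ha⟩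
      exact Sierp.le_def.1 (hh ⟨n, rfl⟩ a) ha
  have hcont := hμ.1.2 _ _ (Set.countable_range _) (Set.range_nonempty _)
    (by rintro _ ⟨i, rfl⟩ _ ⟨j, rfl⟩
        rcases le_total i j with h | h
        · exact ⟨toS (B j), ⟨j, rfl⟩, toS_mono (hB h), le_refl _⟩
        · exact ⟨toS (B i), ⟨i, rfl⟩, le_refl _, toS_mono (hB h)⟩) hlub
  have := sSup_toE hcont
  rw [← Set.range_comp, ← Set.range_comp, sSup_range] at this
  exact this

theorem vSet_iUnion_disjoint (hadd : AddSpecNN add) (hμ : IsValuation add μ)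
    (s : ℕ → Set A) (hdis : Pairwise (Function.onFun Disjoint s)) :
    vSet μ (⋃ n, s n) = ∑' n, vSet μ (s n) := by
  have hBU : (⋃ n, s n) = ⋃ n, ⋃ k < n, s k := by
    ext a
    simp only [Set.mem_iUnion]
    constructor
    · rintro ⟨n, hn⟩; exact ⟨n + 1, n, Nat.lt_succ_self n, hn⟩
    · rintro ⟨n, k, _, hk⟩; exact ⟨k, hk⟩
  have hpart : ∀ n, vSet μ (⋃ k < n, s k) = ∑ k ∈ Finset.range n, vSet μ (s k) := by
    intro n
    induction n with
    | zero => simpa using vSet_empty hμ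
    | succ n ih =>
        rw [Set.biUnion_lt_succ, Finset.sum_range_succ, ← ih]
        apply vSet_union_disjoint hadd hμ
        rw [Set.disjoint_left]
        rintro a ⟨t, ⟨k, rfl⟩, ht⟩
        simp only [Set.mem_iUnion] at ht
        obtain ⟨hk, ha⟩ := ht
        exact fun han => Set.disjoint_left.1 (hdis (Nat.ne_of_lt hk)) ha han
  have hBmono : Monotone (fun n => ⋃ k < n, s k) := by
    intro i j hij
    intro a ha
    simp only [Set.mem_iUnion] at ha ⊢
    obtain ⟨k, hk, hak⟩ := ha
    exact ⟨k, lt_of_lt_of_le hk hij, hak⟩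
  rw [hBU, vSet_iUnion_monotone hμ _ hBmono, ENNReal.tsum_eq_iSup_nat]
  simp_rw [hpart]

/-- The measure induced by a valuation (w.r.t. the discrete σ-algebra). -/
def vMeasure (hadd : AddSpecNN add) (hμ : IsValuation add μ) : @Measure A ⊤ :=
  @Measure.ofMeasurable A ⊤ (fun s _ => vSet μ s) (vSet_empty hμ)
    (fun f _ hd => vSet_iUnion_disjoint hadd hμ f hd)

theorem vMeasure_apply (hadd : AddSpecNN add) (hμ : IsValuation add μ) (s : Set A) :
    vMeasure hadd hμ s = vSet μ s :=
  @Measure.ofMeasurable_apply A ⊤ _ _ _ s MeasurableSpace.measurableSet_top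

end Valuation

section Integral

variable {A : Type} {add : NNLowerReal → NNLowerReal → NNLowerReal}

theorem meas_top {g : A → ℝ≥0∞} : @Measurable A ℝ≥0∞ ⊤ _ g :=
  fun _ _ => MeasurableSpace.measurableSet_top

/-- The lower integral associated to a measure. -/
def Iν (ν : @Measure A ⊤) : (A → NNLowerReal) → NNLowerReal :=
  fun f => ofE (@lintegral A ⊤ ν (fun a => toE (f a)))

theorem Iν_mono (ν : @Measure A ⊤) : Monotone (Iν ν) := by
  intro f g h
  rw [Iν, Iν, ofE_le_iff]
  exact lintegral_mono (fun a => toE_le_iff.2 (h a))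

theorem toE_Iν (ν : @Measure A ⊤) (f : A → NNLowerReal) :
    toE (Iν ν f) = @lintegral A ⊤ ν (fun a => toE (f a)) := toE_ofE _

theorem Iν_isLowerIntegral (hadd : AddSpecNN add) (ν : @Measure A ⊤) :
    IsLowerIntegral add (Iν ν) := by
  refine ⟨⟨Iν_mono ν, ?_⟩, ?_, ?_⟩
  · intro U x hc hne hd hlub
    obtain ⟨g, hgU, hgmono, hgcof⟩ := exists_monotone_cofinal hc hne hd
    have hpt : ∀ a, toE (x a) = ⨆ n, toE (g n a) := by
      intro a
      apply le_antisymm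
      · have h1 := sSup_toE (isLUB_eval hlub a)
        rw [h1]
        apply sSup_le
        rintro _ ⟨_, ⟨f, hf, rfl⟩, rfl⟩
        obtain ⟨n, hn⟩ := hgcof f hf
        exact le_trans (toE_le_iff.2 (hn a)) (le_iSup (fun n => toE (g n a)) n)
      · exact iSup_le fun n => toE_le_iff.2 (hlub.1 (hgU n) a)
    have hint : toE (Iν ν x) = ⨆ n, toE (Iν ν (g n)) := by
      rw [toE_Iν]
      have : (fun a => toE (x a)) = fun a => ⨆ n, toE (g n a) := funext hpt
      rw [this, lintegral_iSup (fun n => meas_top)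
        (fun i j hij a => toE_le_iff.2 (hgmono hij a))]
      simp_rw [toE_Iν]
    constructor
    · rintro _ ⟨f, hf, rfl⟩
      exact Iν_mono ν (hlub.1 hf)
    · intro b hb
      rw [← toE_le_iff, hint]
      exact iSup_le fun n => toE_le_iff.2 (hb ⟨g n, hgU n, rfl⟩)
  · apply toE_inj
    rw [toE_Iν, toE_zeroNN]
    simp [toE_zeroNN]
  · intro f g
    apply toE_inj
    rw [toE_add hadd, toE_Iν, toE_Iν, toE_Iν]
    have : (fun a => toE (add (f a) (g a))) =
        fun a => toE (f a) + toE (g a) := funext fun a => toE_add hadd _ _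
    rw [this, lintegral_add_left meas_top]

theorem Iν_indicator (ν : @Measure A ⊤) (U : A → Sierp) :
    Iν ν (fun a => indicatorLR (U a)) = ofE (ν (toSet U)) := by
  classical
  rw [Iν]
  congr 1
  have : (fun a => toE (indicatorLR (U a))) =
      (toSet U).indicator (fun _ => (1 : ℝ≥0∞)) := by
    funext a
    rw [toE_indicatorLR]
    by_cases h : (U a).1
    · rw [if_pos h, Set.indicator_of_mem (show a ∈ toSet U from h)]
    · rw [if_neg h, Set.indicator_of_notMem (show a ∉ toSet U from h)]
  rw [this]
  exact @lintegral_indicator_one A ⊤ ν (toSet U) MeasurableSpace.measurableSet_top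

end Integral

end
noncomputable section
open Classical

theorem cut_mono (x : NNLowerReal) {q q' : ℚ} (h : q ≤ q') (hc : x.1.cut q') :
    x.1.cut q := by
  rcases eq_or_lt_of_le h with rfl | h
  · exact hc
  · exact x.1.lower q q' h hc

/-- The predicate `(i+1)/m < x`. -/
def cutP (x : NNLowerReal) (m i : ℕ) : Prop := x.1.cut (((i:ℚ)+1)/(m:ℚ))

/-- The number of indices `i < m*n` with `(i+1)/m` below `x`. -/
def cnt (x : NNLowerReal) (m n : ℕ) : ℕ :=
  ((Finset.range (m*n)).filter (cutP x m)).card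

/-- The value of the `(m,n)`-th approximation at level `x`. -/
def vE (x : NNLowerReal) (m n : ℕ) : ℝ≥0∞ :=
  ENNReal.ofReal (1/(m:ℝ)) * (cnt x m n : ℝ≥0∞)

theorem cnt_eq_sum (x : NNLowerReal) (m n : ℕ) :
    cnt x m n = ∑ i ∈ Finset.range (m*n), (if cutP x m i then 1 else 0) :=
  Finset.card_filter _ _

theorem ofReal_one_div_mul (m k : ℕ) (hm : 0 < m) :
    ENNReal.ofReal (1/(m:ℝ)) * (k:ℝ≥0∞) = ENNReal.ofReal (((k:ℚ)/(m:ℚ) : ℚ) : ℝ) := by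
  rw [← ENNReal.ofReal_natCast k, ← ENNReal.ofReal_mul (by positivity)]
  congr 1
  push_cast
  ring

theorem vE_le_toE (x : NNLowerReal) {m : ℕ} (n : ℕ) (hm : 0 < m) :
    vE x m n ≤ toE x := by
  by_cases hc : cnt x m n = 0
  · simp [vE, hc]
  · set F := (Finset.range (m*n)).filter (cutP x m) with hF
    have hFne : F.Nonempty := Finset.card_pos.1 (Nat.pos_of_ne_zero hc)
    set i₀ := F.max' hFne with hi₀
    have hi₀F : i₀ ∈ F := F.max'_mem hFne
    have hcut₀ : cutP x m i₀ := (Finset.mem_filter.1 hi₀F).2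
    have hcard : cnt x m n ≤ i₀ + 1 := by
      have hsub : F ⊆ Finset.range (i₀ + 1) := by
        intro i hi
        exact Finset.mem_range.2 (Nat.lt_succ_of_le (F.le_max' i hi))
      have := Finset.card_le_card hsub
      simp at this
      exact this
    have hcut : x.1.cut ((cnt x m n : ℚ)/(m:ℚ)) := by
      apply cut_mono x _ hcut₀
      have h1 : (cnt x m n : ℚ) ≤ (i₀ : ℚ) + 1 := by exact_mod_cast hcard
      have h2 : (0:ℚ) < (m:ℚ) := by exact_mod_cast hm
      gcongr
    have hlt := (cut_iff_lt_toE x (by positivity)).1 hcut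
    rw [vE, ofReal_one_div_mul _ _ hm]
    exact hlt.le

theorem cnt_mono_n (x : NNLowerReal) (m : ℕ) {n n' : ℕ} (h : n ≤ n') :
    cnt x m n ≤ cnt x m n' := by
  apply Finset.card_le_card
  apply Finset.filter_subset_filter
  exact Finset.range_subset_range.2 (Nat.mul_le_mul_left m h)

theorem vE_mono_n (x : NNLowerReal) (m : ℕ) {n n' : ℕ} (h : n ≤ n') :
    vE x m n ≤ vE x m n' :=
  mul_le_mul_right (by exact_mod_cast cnt_mono_n x m h) _

theorem sum_range_mul' {M : Type*} [AddCommMonoid M] (g : ℕ → M) (N K : ℕ) :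
    ∑ j ∈ Finset.range (N*K), g j
      = ∑ i ∈ Finset.range N, ∑ r ∈ Finset.range K, g (i*K + r) := by
  induction N with
  | zero => simp
  | succ N ih => rw [Nat.succ_mul, Finset.sum_range_add, ih, Finset.sum_range_succ]

theorem div_cancel_E {m k : ℕ} (hm : 0 < m) (hk : 0 < k) :
    ENNReal.ofReal (1/((m*k:ℕ):ℝ)) * ((k:ℕ):ℝ≥0∞) = ENNReal.ofReal (1/(m:ℝ)) := by
  rw [ofReal_one_div_mul (m*k) k (Nat.mul_pos hm hk)]
  congr 1
  have hm' : ((m:ℝ)) ≠ 0 := by positivity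
  have hk' : ((k:ℝ)) ≠ 0 := by positivity
  push_cast
  field_simp

theorem vE_le_mul (x : NNLowerReal) {m k : ℕ} (n : ℕ) (hm : 0 < m) (hk : 0 < k) :
    vE x m n ≤ vE x (m*k) (n*k) := by
  have key : k * cnt x m n ≤ cnt x (m*k) (n*k) := by
    rw [cnt_eq_sum, cnt_eq_sum, Finset.mul_sum]
    have hsub : Finset.range ((m*n)*k) ⊆ Finset.range ((m*k)*(n*k)) := by
      apply Finset.range_subset_range.2
      calc (m*n)*k ≤ ((m*n)*k)*k := Nat.le_mul_of_pos_right _ hk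
        _ = (m*k)*(n*k) := by ring
    calc ∑ i ∈ Finset.range (m*n), k * (if cutP x m i then 1 else 0)
        ≤ ∑ i ∈ Finset.range (m*n), ∑ r ∈ Finset.range k,
            (if cutP x (m*k) (i*k + r) then 1 else 0) := by
          apply Finset.sum_le_sum
          intro i _
          by_cases hcut : cutP x m i
          · rw [if_pos hcut, mul_one]
            have hall : ∀ r ∈ Finset.range k,
                (if cutP x (m*k) (i*k + r) then 1 else 0) = 1 := by
              intro r hr
              rw [if_pos]
              apply cut_mono x _ hcut
              have hrk : (r:ℚ) + 1 ≤ (k:ℚ) := by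
                exact_mod_cast Nat.succ_le_of_lt (Finset.mem_range.1 hr)
              have hm' : (0:ℚ) < (m:ℚ) := by exact_mod_cast hm
              have hk' : (0:ℚ) < (k:ℚ) := by exact_mod_cast hk
              rw [div_le_div_iff₀ (by exact_mod_cast Nat.mul_pos hm hk) hm']
              push_cast
              nlinarith
            rw [Finset.sum_congr rfl hall]
            simp
          · rw [if_neg hcut, mul_zero]
            exact Nat.zero_le _
      _ = ∑ j ∈ Finset.range ((m*n)*k), (if cutP x (m*k) j then 1 else 0) := by
          rw [sum_range_mul' (fun j => if cutP x (m*k) j then 1 else 0) (m*n) k]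
      _ ≤ ∑ j ∈ Finset.range ((m*k)*(n*k)), (if cutP x (m*k) j then 1 else 0) :=
          Finset.sum_le_sum_of_subset hsub
  rw [vE, vE]
  calc ENNReal.ofReal (1/(m:ℝ)) * (cnt x m n : ℝ≥0∞)
      = ENNReal.ofReal (1/((m*k:ℕ):ℝ)) * ((k:ℝ≥0∞) * (cnt x m n : ℝ≥0∞)) := by
        rw [← mul_assoc, div_cancel_E hm hk]
    _ ≤ ENNReal.ofReal (1/((m*k:ℕ):ℝ)) * (cnt x (m*k) (n*k) : ℝ≥0∞) := by
        apply mul_le_mul_right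
        exact_mod_cast key

theorem exists_vE_ge (x : NNLowerReal) {q : ℚ} (h0 : 0 ≤ q) (hc : x.1.cut q) :
    ∃ m n : ℕ, 0 < m ∧ 0 < n ∧ ENNReal.ofReal (q:ℝ) ≤ vE x m n := by
  rcases eq_or_lt_of_le h0 with rfl | hq
  · exact ⟨1, 1, one_pos, one_pos, by simp⟩
  obtain ⟨q', hqq', hq'⟩ := x.1.rounded q hc
  obtain ⟨m, hm⟩ := exists_nat_gt (1/(q'-q))
  have hd : (0:ℚ) < q' - q := by linarith
  have hm0 : (0:ℚ) < m := lt_trans (one_div_pos.2 hd) hm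
  have hmpos : 0 < m := by exact_mod_cast hm0
  have hcl : 0 < ⌈q * m⌉ := Int.ceil_pos.2 (by nlinarith)
  set j := (⌈q * m⌉).toNat with hj
  have hjZ : (j:ℤ) = ⌈q * m⌉ := Int.toNat_of_nonneg hcl.le
  have hjpos : 0 < j := by omega
  have hjq : q * m ≤ (j:ℚ) := by
    have := Int.le_ceil (q * m)
    rw [show ((⌈q*m⌉:ℤ):ℚ) = (j:ℚ) by exact_mod_cast congrArg Int.cast hjZ.symm] at this
    exact this
  have hjub : (j:ℚ) < q * m + 1 := by
    have h1 : (⌈q * m⌉ : ℚ) < q * m + 1 := Int.ceil_lt_add_one _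
    rw [show ((⌈q*m⌉:ℤ):ℚ) = (j:ℚ) by exact_mod_cast congrArg Int.cast hjZ.symm] at h1
    exact h1
  have hcnt : j ≤ cnt x m j := by
    rw [cnt]
    have hsub : Finset.range j ⊆ (Finset.range (m*j)).filter (cutP x m) := by
      intro i hi
      have hij : i < j := Finset.mem_range.1 hi
      rw [Finset.mem_filter]
      refine ⟨Finset.mem_range.2 (lt_of_lt_of_le hij (Nat.le_mul_of_pos_left j hmpos)), ?_⟩
      apply x.1.lower _ q' _ hq'
      have hij' : (i:ℚ) + 1 ≤ (j:ℚ) := by exact_mod_cast hij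
      have hjm : (j:ℚ)/m < q' := by
        rw [div_lt_iff₀ hm0]
        have h1m : 1/(q'-q) < (m:ℚ) := hm
        have h2 : 1 < (q' - q) * m := by
          rw [div_lt_iff₀ (by linarith)] at h1m
          linarith
        nlinarith
      calc ((i:ℚ)+1)/m ≤ (j:ℚ)/m := by gcongr
        _ < q' := hjm
    simpa using Finset.card_le_card hsub
  refine ⟨m, j, hmpos, hjpos, ?_⟩
  rw [vE]
  calc ENNReal.ofReal (q:ℝ)
      ≤ ENNReal.ofReal (((j:ℚ)/(m:ℚ) : ℚ) : ℝ) := by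
        apply ENNReal.ofReal_le_ofReal
        have hle : q ≤ (j:ℚ)/m := by
          rw [le_div_iff₀ hm0]
          exact hjq
        exact_mod_cast hle
    _ = ENNReal.ofReal (1/(m:ℝ)) * ((j:ℕ):ℝ≥0∞) := (ofReal_one_div_mul m j hmpos).symm
    _ ≤ ENNReal.ofReal (1/(m:ℝ)) * (cnt x m j : ℝ≥0∞) := by
        apply mul_le_mul_right
        exact_mod_cast hcnt

end
noncomputable section
open Classical

theorem list_range_sum {M : Type*} [AddCommMonoid M] (F : ℕ → M) (k : ℕ) :
    ((List.range k).map F).sum = ∑ i ∈ Finset.range k, F i := by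
  induction k with
  | zero => simp
  | succ k ih =>
      rw [List.range_succ, List.map_append, List.sum_append, Finset.sum_range_succ, ih]
      simp

section Main

variable {A : Type} {add mul : NNLowerReal → NNLowerReal → NNLowerReal}
  {I : (A → NNLowerReal) → NNLowerReal}

theorem toE_foldr {β : Type*} (hadd : AddSpecNN add) (F : β → NNLowerReal) (l : List β) :
    toE (l.foldr (fun i acc => add (F i) acc) zeroNN)
      = (l.map (fun i => toE (F i))).sum := by
  induction l with
  | nil => simpa using toE_zeroNN
  | cons i l ih => rw [List.foldr_cons, toE_add hadd, ih, List.map_cons, List.sum_cons]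

theorem I_foldr (hI : IsLowerIntegral add I) (F : ℕ → A → NNLowerReal) (l : List ℕ) :
    I (fun a => l.foldr (fun i acc => add (F i a) acc) zeroNN)
      = l.foldr (fun i acc => add (I (F i)) acc) zeroNN := by
  induction l with
  | nil => exact hI.2.1
  | cons i l ih =>
      calc I (fun a => (i :: l).foldr (fun i acc => add (F i a) acc) zeroNN)
          = add (I (F i)) (I (fun a => l.foldr (fun i acc => add (F i a) acc) zeroNN)) :=
            hI.2.2 (F i) (fun a => l.foldr (fun i acc => add (F i a) acc) zeroNN)
        _ = (i :: l).foldr (fun i acc => add (I (F i)) acc) zeroNN := by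
            rw [ih]
            rfl

/-- Iterated addition. -/
def addIter (add : NNLowerReal → NNLowerReal → NNLowerReal) : ℕ → NNLowerReal → NNLowerReal
  | 0, _ => zeroNN
  | k+1, x => add x (addIter add k x)

theorem toE_addIter (hadd : AddSpecNN add) (k : ℕ) (x : NNLowerReal) :
    toE (addIter add k x) = (k : ℝ≥0∞) * toE x := by
  induction k with
  | zero => rw [show addIter add 0 x = zeroNN from rfl, toE_zeroNN]; simp
  | succ k ih =>
      rw [show addIter add (k+1) x = add x (addIter add k x) from rfl, toE_add hadd, ih]
      push_cast
      ring

theorem I_addIter (hI : IsLowerIntegral add I) (k : ℕ) (g : A → NNLowerReal) :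
    I (fun a => addIter add k (g a)) = addIter add k (I g) := by
  induction k with
  | zero => exact hI.2.1
  | succ k ih =>
      calc I (fun a => addIter add (k+1) (g a))
          = add (I g) (I (fun a => addIter add k (g a))) :=
            hI.2.2 g (fun a => addIter add k (g a))
        _ = add (I g) (addIter add k (I g)) := by rw [ih]
        _ = addIter add (k+1) (I g) := rfl

theorem cancel_E1 {m : ℕ} (hm : 0 < m) (X : ℝ≥0∞) :
    (m:ℝ≥0∞) * (ENNReal.ofReal (1/(m:ℝ)) * X) = X := by
  rw [← mul_assoc, ← ENNReal.ofReal_natCast m, ← ENNReal.ofReal_mul (by positivity)]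
  have hm' : (m:ℝ) ≠ 0 := by positivity
  rw [show (m:ℝ) * (1/(m:ℝ)) = 1 by field_simp, ENNReal.ofReal_one, one_mul]

theorem cancel_E2 {m : ℕ} (hm : 0 < m) (X : ℝ≥0∞) :
    ENNReal.ofReal (1/(m:ℝ)) * ((m:ℝ≥0∞) * X) = X := by
  rw [← mul_assoc, mul_comm (ENNReal.ofReal (1/(m:ℝ))) ((m:ℝ≥0∞)), mul_assoc, cancel_E1 hm]

theorem castRange (k : ℕ) :
    (do let a ← List.range k; pure ((a:ℕ):ℚ)) = (List.range k).map (fun i : ℕ => (i:ℚ)) := by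
  induction (List.range k) with
  | nil => rfl
  | cons i l ih => simpa using ih

theorem toE_hfold (hadd : AddSpecNN add) (f : A → NNLowerReal) (m n : ℕ) (a : A) :
    toE ((List.range (m*n)).foldr
        (fun (i : ℕ) acc => add (indicatorLR (openGT f (((i:ℚ)+1)/(m:ℚ)) a)) acc) zeroNN)
      = (cnt (f a) m n : ℝ≥0∞) := by
  rw [toE_foldr hadd (fun (i : ℕ) => indicatorLR (openGT f (((i:ℚ)+1)/(m:ℚ)) a)) (List.range (m*n)),
    list_range_sum, cnt_eq_sum, Nat.cast_sum]
  apply Finset.sum_congr rfl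
  intro i _
  rw [toE_indicatorLR]
  by_cases h : cutP (f a) m i
  · rw [if_pos h, if_pos (show ((openGT f (((i:ℚ)+1)/(m:ℚ))) a).1 from h)]
    simp
  · rw [if_neg h, if_neg (show ¬ ((openGT f (((i:ℚ)+1)/(m:ℚ))) a).1 from h)]
    simp

theorem I_gF_eq_sFMN (hadd : AddSpecNN add) (hmul : MulSpecNN mul)
    {μ : (A → Sierp) → NNLowerReal}
    (hI : IsLowerIntegral add I)
    (hIμ : ∀ U : A → Sierp, I (fun a => indicatorLR (U a)) = μ U)
    (f : A → NNLowerReal) {m : ℕ} (n : ℕ) (hm : 0 < m) :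
    I (fun a => ofE (vE (f a) m n)) = sFMN add mul μ f m n := by
  set c : ℝ≥0∞ := ∑ i ∈ Finset.range (m*n), toE (μ (openGT f (((i:ℚ)+1)/(m:ℚ)))) with hc
  have h1 : addIter add m (I (fun a => ofE (vE (f a) m n)))
      = I (fun a => (List.range (m*n)).foldr
          (fun (i : ℕ) acc => add (indicatorLR (openGT f (((i:ℚ)+1)/(m:ℚ)) a)) acc) zeroNN) := by
    rw [← I_addIter hI]
    congr 1
    funext a
    apply toE_inj
    rw [toE_addIter hadd, toE_ofE, toE_hfold hadd, vE, cancel_E1 hm]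
  have h2 : I (fun a => (List.range (m*n)).foldr
        (fun (i : ℕ) acc => add (indicatorLR (openGT f (((i:ℚ)+1)/(m:ℚ)) a)) acc) zeroNN)
      = (List.range (m*n)).foldr
          (fun (i : ℕ) acc => add (μ (openGT f (((i:ℚ)+1)/(m:ℚ)))) acc) zeroNN := by
    rw [I_foldr hI (fun (i : ℕ) => fun a => indicatorLR (openGT f (((i:ℚ)+1)/(m:ℚ)) a))]
    congr 1
    funext i acc
    rw [hIμ (openGT f (((i:ℚ)+1)/(m:ℚ)))]
  have h3 : toE ((List.range (m*n)).foldr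
        (fun (i : ℕ) acc => add (μ (openGT f (((i:ℚ)+1)/(m:ℚ)))) acc) zeroNN) = c := by
    rw [toE_foldr hadd (fun (i : ℕ) => μ (openGT f (((i:ℚ)+1)/(m:ℚ)))), list_range_sum]
  have h4 : toE (sFMN add mul μ f m n) = ENNReal.ofReal (1/(m:ℝ)) * c := by
    rw [sFMN, toE_mul hmul, toE_ratNN]
    congr 1
    · push_cast
      ring_nf
    · rw [castRange (m*n),
        toE_foldr hadd (fun i : ℚ => μ (openGT f ((i+1)/(m:ℚ)))) ((List.range (m*n)).map _),
        List.map_map]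
      exact list_range_sum ((fun i : ℚ => toE (μ (openGT f ((i+1)/(m:ℚ))))) ∘
        (fun i : ℕ => (i:ℚ))) (m*n)
  have h5 : (m:ℝ≥0∞) * toE (I (fun a => ofE (vE (f a) m n))) = c := by
    rw [← toE_addIter hadd, h1, h2, h3]
  apply toE_inj
  rw [h4, ← h5, cancel_E2 hm]

theorem sFMN_isLUB (hadd : AddSpecNN add) (hmul : MulSpecNN mul)
    {μ : (A → Sierp) → NNLowerReal}
    (hI : IsLowerIntegral add I)
    (hIμ : ∀ U : A → Sierp, I (fun a => indicatorLR (U a)) = μ U)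
    (f : A → NNLowerReal) :
    IsLUB {y | ∃ m n : ℕ, 0 < m ∧ 0 < n ∧ y = sFMN add mul μ f m n} (I f) := by
  let gF : ℕ → ℕ → A → NNLowerReal := fun m n a => ofE (vE (f a) m n)
  let S : Set (A → NNLowerReal) := {g | ∃ m n : ℕ, 0 < m ∧ 0 < n ∧ g = gF m n}
  have hSc : S.Countable := by
    apply (Set.countable_range (fun p : ℕ × ℕ => gF p.1 p.2)).mono
    rintro g ⟨m, n, _, _, rfl⟩
    exact ⟨(m, n), rfl⟩
  have hSne : S.Nonempty := ⟨gF 1 1, 1, 1, one_pos, one_pos, rfl⟩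
  have hSdir : DirectedOn (· ≤ ·) S := by
    rintro _ ⟨m, n, hm, hn, rfl⟩ _ ⟨m', n', hm', hn', rfl⟩
    refine ⟨gF (m*m') (max (n*m') (n'*m)), ⟨m*m', max (n*m') (n'*m), Nat.mul_pos hm hm',
      lt_of_lt_of_le (Nat.mul_pos hn hm') (le_max_left _ _), rfl⟩, ?_, ?_⟩
    · intro a
      rw [← toE_le_iff, toE_ofE, toE_ofE]
      exact le_trans (vE_le_mul (f a) n hm hm')
        (vE_mono_n (f a) (m*m') (le_max_left _ _))
    · intro a
      rw [← toE_le_iff, toE_ofE, toE_ofE]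
      have h1 : vE (f a) m' n' ≤ vE (f a) (m'*m) (n'*m) := vE_le_mul (f a) n' hm' hm
      rw [Nat.mul_comm m' m] at h1
      exact le_trans h1 (vE_mono_n (f a) (m*m') (le_max_right _ _))
  have hSlub : IsLUB S f := by
    constructor
    · rintro _ ⟨m, n, hm, hn, rfl⟩
      intro a
      apply toE_le_iff.1
      rw [toE_ofE]
      exact vE_le_toE (f a) n hm
    · intro h hub a
      apply toE_le_iff.1
      show (⨆ q : {q : ℚ // 0 ≤ q ∧ (f a).1.cut q}, ENNReal.ofReal (q.1 : ℝ)) ≤ toE (h a)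
      apply iSup_le
      rintro ⟨q, hq0, hqc⟩
      obtain ⟨m, n, hm, hn, hv⟩ := exists_vE_ge (f a) hq0 hqc
      calc ENNReal.ofReal (q : ℝ) ≤ vE (f a) m n := hv
        _ = toE (gF m n a) := (toE_ofE _).symm
        _ ≤ toE (h a) := toE_le_iff.2 (hub ⟨m, n, hm, hn, rfl⟩ a)
  have hIlub := hI.1.2 S f hSc hSne hSdir hSlub
  have hseteq : {y | ∃ m n : ℕ, 0 < m ∧ 0 < n ∧ y = sFMN add mul μ f m n} = I '' S := by
    ext y
    constructor
    · rintro ⟨m, n, hm, hn, rfl⟩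
      exact ⟨gF m n, ⟨m, n, hm, hn, rfl⟩, I_gF_eq_sFMN hadd hmul hI hIμ f n hm⟩
    · rintro ⟨g, ⟨m, n, hm, hn, rfl⟩, rfl⟩
      refine ⟨m, n, hm, hn, ?_⟩
      show I (fun a => ofE (vE (f a) m n)) = sFMN add mul μ f m n
      exact I_gF_eq_sFMN hadd hmul hI hIμ f n hm
  rw [hseteq]
  exact hIlub

end Main

end
noncomputable section
open Classical

section Final

variable {A : Type} {add mul : NNLowerReal → NNLowerReal → NNLowerReal}

theorem nnLeAntisymm {L M : NNLowerReal} (h1 : L ≤ M) (h2 : M ≤ L) : L = M :=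
  toE_inj (le_antisymm (toE_le_iff.2 h1) (toE_le_iff.2 h2))

theorem indicatorLR_mono {s t : Sierp} (h : s ≤ t) : indicatorLR s ≤ indicatorLR t := by
  apply toE_le_iff.1
  rw [toE_indicatorLR, toE_indicatorLR]
  by_cases hs : s.1
  · rw [if_pos hs, if_pos (h hs)]
  · rw [if_neg hs]
    exact zero_le

theorem indicatorLR_botS : indicatorLR Sierp.botS = zeroNN := by
  apply toE_inj
  rw [toE_indicatorLR, toE_zeroNN, if_neg]
  exact fun h => h

theorem toE_add_indicator (hadd : AddSpecNN add) (s t : Sierp) :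
    toE (add (indicatorLR s) (indicatorLR t))
      = toE (add (indicatorLR (s.or t)) (indicatorLR (s.and t))) := by
  rw [toE_add hadd, toE_add hadd, toE_indicatorLR, toE_indicatorLR, toE_indicatorLR,
    toE_indicatorLR]
  have hor : ((s.or t).1 : Prop) = (s.1 ∨ t.1) := rfl
  have hand : ((s.and t).1 : Prop) = (s.1 ∧ t.1) := rfl
  rw [hor, hand]
  by_cases hs : s.1 <;> by_cases ht : t.1 <;> simp [hs, ht]

theorem integral_to_valuation (hadd : AddSpecNN add)
    {I : (A → NNLowerReal) → NNLowerReal} (hI : IsLowerIntegral add I) :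
    IsValuation add (fun U : A → Sierp => I (fun a => indicatorLR (U a))) := by
  have hΦmono : Monotone (fun U : A → Sierp => (fun a => indicatorLR (U a))) :=
    fun U V h a => indicatorLR_mono (h a)
  refine ⟨⟨fun U V h => hI.1.1 (hΦmono h), ?_⟩, ?_, ?_⟩
  · intro 𝒰 V hc hne hd hlub
    have hΦlub : IsLUB ((fun U : A → Sierp => (fun a => indicatorLR (U a))) '' 𝒰)
        (fun a => indicatorLR (V a)) := by
      constructor
      · rintro _ ⟨U, hU, rfl⟩
        exact hΦmono (hlub.1 hU)
      · intro h hh a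
        apply toE_le_iff.1
        rw [toE_indicatorLR]
        by_cases hV : (V a).1
        · rw [if_pos hV]
          have hex : ∃ U : {U // U ∈ 𝒰}, (U.1 a).1 := by
            have hub : V a ≤ ⟨∃ U : {U // U ∈ 𝒰}, (U.1 a).1, InS_all _⟩ := by
              have := (isLUB_eval hlub a).2
              apply this
              rintro _ ⟨U, hU, rfl⟩
              exact fun hUa => ⟨⟨U, hU⟩, hUa⟩
            exact hub hV
          obtain ⟨⟨U, hU⟩, hUa⟩ := hex
          have h1 : toE (indicatorLR (U a)) ≤ toE (h a) :=
            toE_le_iff.2 (hh ⟨U, hU, rfl⟩ a)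
          rw [toE_indicatorLR, if_pos hUa] at h1
          exact h1
        · rw [if_neg hV]
          exact zero_le
    have hres := hI.1.2 _ _ (hc.image _) (hne.image _)
      (by rintro _ ⟨U, hU, rfl⟩ _ ⟨U', hU', rfl⟩
          obtain ⟨W, hW, h1, h2⟩ := hd U hU U' hU'
          exact ⟨_, ⟨W, hW, rfl⟩, hΦmono h1, hΦmono h2⟩) hΦlub
    rw [Set.image_image] at hres
    exact hres
  · show I (fun a => indicatorLR Sierp.botS) = zeroNN
    have hzz : (fun _ : A => indicatorLR Sierp.botS) = (fun _ => zeroNN) :=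
      funext fun _ => indicatorLR_botS
    rw [hzz]
    exact hI.2.1
  · intro U V
    rw [← hI.2.2, ← hI.2.2]
    congr 1
    funext a
    apply toE_inj
    exact toE_add_indicator hadd (U a) (V a)

theorem sFMN_mono_mu (hadd : AddSpecNN add) (hmul : MulSpecNN mul)
    {μ ν : (A → Sierp) → NNLowerReal} (h : ∀ U, μ U ≤ ν U)
    (f : A → NNLowerReal) (m n : ℕ) :
    sFMN add mul μ f m n ≤ sFMN add mul ν f m n := by
  apply toE_le_iff.1
  rw [sFMN, sFMN, toE_mul hmul, toE_mul hmul]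
  apply mul_le_mul_right
  rw [castRange (m*n),
    toE_foldr hadd (fun i : ℚ => μ (openGT f ((i+1)/(m:ℚ)))) _,
    toE_foldr hadd (fun i : ℚ => ν (openGT f ((i+1)/(m:ℚ)))) _,
    List.map_map, List.map_map,
    list_range_sum ((fun i : ℚ => toE (μ (openGT f ((i+1)/(m:ℚ))))) ∘ (fun i : ℕ => (i:ℚ))),
    list_range_sum ((fun i : ℚ => toE (ν (openGT f ((i+1)/(m:ℚ))))) ∘ (fun i : ℕ => (i:ℚ)))]
  apply Finset.sum_le_sum
  intro i _
  exact toE_le_iff.2 (h _)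

end Final

end
/-- Riesz representation theorem: `𝓘 ↦ (U ↦ 𝓘(𝟙_U))` maps lower
integrals to valuations; it is a bijection onto the valuations (every valuation
extends uniquely to a lower integral), it is an order isomorphism for the pointwise
orders, it restricts to sub-probability integrals/valuations, and its inverse sends a
valuation `μ` to `f ↦ ⋁_{m,n ≥ 1} s_{f,m,n}`. -/
theorem riesz_representation {A : Type}
    (add mul : NNLowerReal → NNLowerReal → NNLowerReal)
    (hadd : AddSpecNN add) (hmul : MulSpecNN mul) :
    (∀ I : (A → NNLowerReal) → NNLowerReal, IsLowerIntegral add I →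
        IsValuation add (fun U : A → Sierp => I (fun a => indicatorLR (U a)))) ∧
      (∀ μ : (A → Sierp) → NNLowerReal, IsValuation add μ →
        ∃! I : (A → NNLowerReal) → NNLowerReal,
          IsLowerIntegral add I ∧
            ∀ U : A → Sierp, I (fun a => indicatorLR (U a)) = μ U) ∧
      (∀ I J : (A → NNLowerReal) → NNLowerReal,
        IsLowerIntegral add I → IsLowerIntegral add J →
          ((∀ f, I f ≤ J f) ↔
            ∀ U : A → Sierp,
              I (fun a => indicatorLR (U a)) ≤ J (fun a => indicatorLR (U a)))) ∧
      (∀ I : (A → NNLowerReal) → NNLowerReal, IsLowerIntegral add I →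
        (I (fun _ => indicatorLR Sierp.topS) ≤ oneNN ↔
          (fun U : A → Sierp => I (fun a => indicatorLR (U a)))
            (fun _ => Sierp.topS) ≤ oneNN)) ∧
      (∀ μ : (A → Sierp) → NNLowerReal, IsValuation add μ →
        ∀ I : (A → NNLowerReal) → NNLowerReal,
          IsLowerIntegral add I →
            (∀ U : A → Sierp, I (fun a => indicatorLR (U a)) = μ U) →
              ∀ f : A → NNLowerReal,
                IsLUB {y | ∃ m n : ℕ, 0 < m ∧ 0 < n ∧ y = sFMN add mul μ f m n}
                  (I f)) := by

  refine ⟨?_, ?_, ?_, ?_, ?_⟩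
  · intro I hI
    exact integral_to_valuation hadd hI
  · intro μ hμ
    have hident : ∀ U : A → Sierp,
        Iν (vMeasure hadd hμ) (fun a => indicatorLR (U a)) = μ U := by
      intro U
      rw [Iν_indicator, vMeasure_apply hadd hμ, vSet, toS_toSet, ofE_toE]
    refine ⟨Iν (vMeasure hadd hμ), ⟨Iν_isLowerIntegral hadd _, hident⟩, ?_⟩
    rintro J ⟨hJ, hJμ⟩
    funext f
    have LJ := sFMN_isLUB hadd hmul hJ hJμ f
    have LI := sFMN_isLUB hadd hmul (Iν_isLowerIntegral hadd (vMeasure hadd hμ)) hident f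
    exact nnLeAntisymm (LJ.2 LI.1) (LI.2 LJ.1)
  · intro I J hI hJ
    constructor
    · intro h U
      exact h _
    · intro h f
      have LI := sFMN_isLUB hadd hmul hI (fun U => rfl) f
      have LJ := sFMN_isLUB hadd hmul hJ (fun U => rfl) f
      apply LI.2
      rintro y ⟨m, n, hm, hn, rfl⟩
      exact le_trans (sFMN_mono_mu hadd hmul h f m n) (LJ.1 ⟨m, n, hm, hn, rfl⟩)
  · intro I hI
    exact Iff.rfl
  · intro μ hμ I hI hIμ f
    exact sFMN_isLUB hadd hmul hI hIμ f
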